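/- arXiv:2310.14770 — 2 statements merged into one kernel-verified Lean document; each statement's English description precedes it below -/
import Mathlib

section
/- Theorem (H-consistency bound for cross-entropy score-based surrogates, conditional form, case μ ∈ [2,∞)). For every μ ∈ [2,∞), every conditional probability vector p, and every score vector v ∈ ℝ^{n+1}, the abstention calibration gap is bounded linearly by the surrogate calibration gap: ΔC_abs(v,p) ≤ (μ − 1) · (n+1)^{μ−1} · ΔC_μ(v,p). This is the conditional form, over a symmetric and complete hypothesis set, of the H-consistency bound with Γ_μ(t) = (μ−1)(n+1)^{μ−1} t; in particular the mean absolute error surrogate (μ = 2) satisfies ΔC_abs(v,p) ≤ (n+1) ΔC_2(v,p). -/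
/- Setting: `n = m + 1 ≥ 2` classes (indices `0, …, m` of `Fin (m+2)` via `castSucc`), the
abstention label is `Fin.last (m+1)`, and `c ∈ (0,1)` is the abstention cost. -/

/-- Maximum of the class scores. -/
noncomputable def classMax (m : ℕ) (v : Fin (m + 2) → ℝ) : ℝ :=
  Finset.univ.sup' Finset.univ_nonempty (fun i : Fin (m + 1) => v i.castSucc)

/-- The prediction `𝗁(v)` of a score vector: the abstention label `Fin.last (m+1)` if its score
is at least the maximal class score, and otherwise the smallest class index achieving the
maximal class score (deterministic tie-breaking). -/
noncomputable def pred (m : ℕ) (v : Fin (m + 2) → ℝ) : Fin (m + 2) :=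
  if classMax m v ≤ v (Fin.last (m + 1)) then Fin.last (m + 1)
  else Fin.castSucc <|
    (Finset.univ.filter fun i : Fin (m + 1) => v i.castSucc = classMax m v).min'
      (by
        obtain ⟨b, -, hb⟩ :=
          Finset.exists_mem_eq_sup' (Finset.univ_nonempty (α := Fin (m + 1)))
            (fun i : Fin (m + 1) => v i.castSucc)
        exact ⟨b, Finset.mem_filter.mpr ⟨Finset.mem_univ b, hb.symm⟩⟩)

/-- Extension of a conditional probability vector by `p (n+1) := 1 - c`. -/
noncomputable def pext (m : ℕ) (c : ℝ) (p : Fin (m + 1) → ℝ) : Fin (m + 2) → ℝ :=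
  Fin.snoc p (1 - c)

/-- Conditional abstention risk `C_abs(v, p) = 1 - p(𝗁(v))`. -/
noncomputable def condAbsRisk (m : ℕ) (c : ℝ) (p : Fin (m + 1) → ℝ)
    (v : Fin (m + 2) → ℝ) : ℝ :=
  1 - pext m c p (pred m v)

/-- The cross-entropy family of losses `ℓ_μ` (logistic loss at `μ = 1`, generalized
cross-entropy for `μ ∈ (1,2)`, mean absolute error at `μ = 2`). -/
noncomputable def ellmu (m : ℕ) (μ : ℝ) (v : Fin (m + 2) → ℝ) (y : Fin (m + 2)) : ℝ :=
  if μ = 1 then Real.log (∑ y', Real.exp (v y' - v y))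
  else (1 / (1 - μ)) * ((∑ y', Real.exp (v y' - v y)) ^ (1 - μ) - 1)

/-- Conditional risk of the cross-entropy score-based surrogate
`C_μ(v, p) = Σ_{y=1}^{n+1} p(y) ℓ_μ(v, y)`, with `p(n+1) = 1 - c`. -/
noncomputable def condSurRisk (m : ℕ) (μ c : ℝ) (p : Fin (m + 1) → ℝ)
    (v : Fin (m + 2) → ℝ) : ℝ :=
  ∑ y, pext m c p y * ellmu m μ v y

lemma vle_pred (m : ℕ) (v : Fin (m + 2) → ℝ) (y : Fin (m + 2)) : v y ≤ v (pred m v) := by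
  have hclass : ∀ i : Fin (m+1), v i.castSucc ≤ classMax m v := fun i => by
    unfold classMax; exact Finset.le_sup' (fun i : Fin (m+1) => v i.castSucc) (Finset.mem_univ i)
  unfold pred
  split_ifs with h
  · cases y using Fin.lastCases with
    | last => exact le_rfl
    | cast i => exact (hclass i).trans h
  · have hmem := Finset.min'_mem
      (Finset.univ.filter fun i : Fin (m+1) => v i.castSucc = classMax m v)
      (by
        obtain ⟨b, -, hb⟩ :=
          Finset.exists_mem_eq_sup' (Finset.univ_nonempty (α := Fin (m + 1)))
            (fun i : Fin (m + 1) => v i.castSucc)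
        exact ⟨b, Finset.mem_filter.mpr ⟨Finset.mem_univ b, hb.symm⟩⟩)
    have heq := (Finset.mem_filter.mp hmem).2
    rw [heq]
    cases y using Fin.lastCases with
    | last => exact (not_le.mp h).le
    | cast i => exact hclass i

lemma bernoulli_rpow (t : ℝ) (ht0 : 0 < t) (ht1 : t ≤ 1) (r : ℝ) (k : ℕ) (hr0 : 0 ≤ r)
    (hrk : r ≤ k) : 1 - t ^ r ≤ k * (1 - t) := by
  have h1 : t ^ (k : ℝ) ≤ t ^ r := Real.rpow_le_rpow_of_exponent_ge ht0 ht1 hrk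
  rw [Real.rpow_natCast] at h1
  have h2 : 1 + (k : ℝ) * (t - 1) ≤ t ^ k := by
    have h := one_add_mul_le_pow (a := t - 1) (by linarith) k
    have e : 1 + (t - 1) = t := by ring
    rw [e] at h; linarith
  nlinarith

section main
variable (m : ℕ) (μ : ℝ)

lemma sum_exp_ge_one (w : Fin (m + 2) → ℝ) (y : Fin (m + 2)) :
    1 ≤ ∑ y', Real.exp (w y' - w y) := by
  calc (1:ℝ) = Real.exp (w y - w y) := by simp
    _ ≤ ∑ y', Real.exp (w y' - w y) :=
      Finset.single_le_sum (f := fun y' => Real.exp (w y' - w y))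
        (fun i _ => (Real.exp_pos _).le) (Finset.mem_univ y)

lemma ellmu_eq (hμ1 : μ ≠ 1) (w : Fin (m + 2) → ℝ) (y : Fin (m + 2)) :
    ellmu m μ w y = (1 - (∑ y', Real.exp (w y' - w y)) ^ (1 - μ)) / (μ - 1) := by
  unfold ellmu
  rw [if_neg hμ1]
  have h2 : 1 - μ ≠ 0 := fun hh => hμ1 (by linarith)
  have h3 : μ - 1 ≠ 0 := fun hh => hμ1 (by linarith)
  rw [eq_div_iff h3, div_mul_eq_mul_div, div_mul_eq_mul_div, div_eq_iff h2]
  ring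

lemma ellmu_nonneg (hμ : 2 ≤ μ) (w : Fin (m + 2) → ℝ) (y : Fin (m + 2)) :
    0 ≤ ellmu m μ w y := by
  rw [ellmu_eq m μ (by linarith) w y]
  have hS := sum_exp_ge_one m w y
  have h1 : (∑ y', Real.exp (w y' - w y)) ^ (1 - μ) ≤ 1 :=
    Real.rpow_le_one_of_one_le_of_nonpos hS (by linarith)
  apply div_nonneg <;> linarith

lemma ellmu_le (hμ : 2 ≤ μ) (w : Fin (m + 2) → ℝ) (y : Fin (m + 2)) :
    ellmu m μ w y ≤ 1 / (μ - 1) := by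
  rw [ellmu_eq m μ (by linarith) w y]
  have hS := sum_exp_ge_one m w y
  have h0 : (0:ℝ) ≤ (∑ y', Real.exp (w y' - w y)) ^ (1 - μ) := Real.rpow_nonneg (by linarith) _
  rw [div_le_div_iff₀ (by linarith) (by linarith)]
  nlinarith

end main

set_option maxHeartbeats 2000000 in
/-- **Theorem (H-consistency bound for cross-entropy score-based surrogates, conditional
form, case `μ ∈ [2,∞)`).** The abstention calibration gap is bounded linearly:
`ΔC_abs(v,p) ≤ (μ-1) · (n+1)^(μ-1) · ΔC_μ(v,p)`, where `n + 1 = m + 2` and the calibration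
gaps are taken over all score vectors (symmetric and complete hypothesis set). -/
theorem stmt_4 (m : ℕ) (hm : 1 ≤ m) (c : ℝ) (hc : c ∈ Set.Ioo (0 : ℝ) 1)
    (μ : ℝ) (hμ : 2 ≤ μ)
    (p : Fin (m + 1) → ℝ) (hp0 : ∀ y, 0 ≤ p y) (hp1 : ∑ y, p y = 1)
    (v : Fin (m + 2) → ℝ) :
    condAbsRisk m c p v - ⨅ w, condAbsRisk m c p w
      ≤ (μ - 1) * ((m + 2 : ℕ) : ℝ) ^ (μ - 1) *
          (condSurRisk m μ c p v - ⨅ w, condSurRisk m μ c p w) := by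
  obtain ⟨hc0, hc1⟩ := hc
  have hμ1 : μ ≠ 1 := by linarith
  have hr1 : (1:ℝ) ≤ μ - 1 := by linarith
  have hr0 : (0:ℝ) < μ - 1 := by linarith
  -- basic facts about pext
  have hpe0 : ∀ y, 0 ≤ pext m c p y := by
    intro y
    cases y using Fin.lastCases with
    | last => rw [pext, Fin.snoc_last]; linarith
    | cast i => rw [pext, Fin.snoc_castSucc]; exact hp0 i
  have hpe1 : ∀ y, pext m c p y ≤ 1 := by
    intro y
    cases y using Fin.lastCases with
    | last => rw [pext, Fin.snoc_last]; linarith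
    | cast i =>
      rw [pext, Fin.snoc_castSucc]
      calc p i ≤ ∑ j, p j := Finset.single_le_sum (fun j _ => hp0 j) (Finset.mem_univ i)
        _ = 1 := hp1
  -- argmax of pext
  obtain ⟨a, -, ha⟩ := Finset.exists_max_image Finset.univ (pext m c p) Finset.univ_nonempty
  have ha' : ∀ y, pext m c p y ≤ pext m c p a := fun y => ha y (Finset.mem_univ y)
  set P := ∑ y, pext m c p y with hP
  set h := pred m v with hh
  set pa := pext m c p a with hpa
  set ph := pext m c p h with hph
  set K := ((m + 2 : ℕ) : ℝ) ^ (μ - 1) with hK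
  have hK0 : 0 < K := Real.rpow_pos_of_pos (by positivity) _
  -- Step 1 : abstention side
  have hIabs : 1 - pa ≤ ⨅ w, condAbsRisk m c p w := by
    apply le_ciInf
    intro w
    have := ha' (pred m w)
    unfold condAbsRisk
    linarith
  -- softmax probabilities
  set T := ∑ y', Real.exp (v y') with hT
  have hT0 : 0 < T := Finset.sum_pos (fun _ _ => Real.exp_pos _) Finset.univ_nonempty
  set q := fun y : Fin (m+2) => Real.exp (v y) / T with hq
  have hq0 : ∀ y, 0 < q y := fun y => by positivity
  have hqsum : ∑ y, q y = 1 := by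
    simp only [hq]
    rw [← Finset.sum_div, ← hT, div_self hT0.ne']
  have hSq : ∀ y : Fin (m+2), (∑ y', Real.exp (v y' - v y)) = (q y)⁻¹ := by
    intro y
    simp only [Real.exp_sub, hq]
    rw [← Finset.sum_div, ← hT]
    field_simp
  have hellmu : ∀ y, ellmu m μ v y = (1 - (q y) ^ (μ - 1)) / (μ - 1) := by
    intro y
    rw [ellmu_eq m μ hμ1 v y, hSq y, Real.inv_rpow (hq0 y).le, ← Real.rpow_neg (hq0 y).le,
      neg_sub]
  -- identity for the surrogate risk
  set Φ := ∑ y, pext m c p y * (q y) ^ (μ - 1) with hΦ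
  have hCv : condSurRisk m μ c p v = (P - Φ) / (μ - 1) := by
    unfold condSurRisk
    rw [Finset.sum_congr rfl (fun y _ => by rw [hellmu y])]
    rw [Finset.sum_congr rfl (fun y (_ : y ∈ Finset.univ) =>
      (by ring : pext m c p y * ((1 - (q y) ^ (μ - 1)) / (μ - 1))
        = (pext m c p y - pext m c p y * (q y) ^ (μ - 1)) / (μ - 1)))]
    rw [← Finset.sum_div, Finset.sum_sub_distrib]
  -- lower bound on the infimum approach
  have hbdd : BddBelow (Set.range (condSurRisk m μ c p)) := by
    refine ⟨0, ?_⟩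
    rintro x ⟨w, rfl⟩
    exact Finset.sum_nonneg fun y _ => mul_nonneg (hpe0 y) (ellmu_nonneg m μ hμ w y)
  have hIsur : (⨅ w, condSurRisk m μ c p w) ≤ (P - pa) / (μ - 1) := by
    apply le_of_forall_pos_le_add
    intro ε hε
    set k := ⌈μ⌉₊ with hkdef
    have hk0 : 0 < (k : ℝ) := by
      have : 0 < k := Nat.ceil_pos.mpr (by linarith)
      exact_mod_cast this
    have hμk : μ - 1 ≤ (k : ℝ) := by have := Nat.le_ceil μ; linarith
    set δ := ε / k with hδdef
    have hδ : 0 < δ := div_pos hε hk0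
    have hm1 : (0:ℝ) < (m:ℝ) + 1 := by positivity
    set R := Real.log (((m:ℝ) + 1) / δ) with hR
    have hmδ : (0:ℝ) < ((m:ℝ) + 1) / δ := by positivity
    have heR : Real.exp (-R) = δ / ((m:ℝ) + 1) := by
      rw [hR, Real.exp_neg, Real.exp_log hmδ, inv_div]
    set w := (fun y : Fin (m + 2) => if y = a then R else 0) with hw
    have hwa : w a = R := if_pos rfl
    have hSa : (∑ y', Real.exp (w y' - w a)) = 1 + δ := by
      have hterm : ∀ y' : Fin (m + 2), Real.exp (w y' - w a)
          = δ / ((m:ℝ) + 1) + (if y' = a then 1 - δ / ((m:ℝ) + 1) else 0) := by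
        intro y'
        by_cases hy : y' = a
        · simp [hy, hwa]
        · have hwy : w y' = 0 := if_neg hy
          rw [hwy, hwa, zero_sub, heR, if_neg hy, add_zero]
      rw [Finset.sum_congr rfl (fun y' _ => hterm y')]
      rw [Finset.sum_add_distrib, Finset.sum_const, Finset.sum_ite_eq' Finset.univ a]
      simp only [Finset.card_univ, Fintype.card_fin, Finset.mem_univ, if_true, nsmul_eq_mul]
      push_cast
      field_simp
      ring
    have hea : ellmu m μ w a ≤ ε := by
      rw [ellmu_eq m μ hμ1 w a, hSa]
      set t := ((1:ℝ) + δ)⁻¹ with ht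
      have ht0 : 0 < t := by positivity
      have ht1 : t ≤ 1 := by
        rw [ht]
        exact inv_le_one_of_one_le₀ (by linarith)
      have h1 : ((1:ℝ) + δ) ^ (1 - μ) = t ^ (μ - 1) := by
        rw [show (1 - μ) = -(μ - 1) by ring, Real.rpow_neg (by positivity),
          ht, Real.inv_rpow (by positivity)]
      rw [h1]
      have h2 := bernoulli_rpow t ht0 ht1 (μ - 1) k (by linarith) hμk
      have htmul : ((1:ℝ) + δ) * t = 1 := mul_inv_cancel₀ (by positivity)
      have h3 : 1 - t ≤ δ := by nlinarith
      have h4 : (k : ℝ) * δ = ε := by rw [hδdef]; field_simp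
      rw [div_le_iff₀ hr0]
      nlinarith
    calc (⨅ w', condSurRisk m μ c p w') ≤ condSurRisk m μ c p w := ciInf_le hbdd w
      _ ≤ (P - pa) / (μ - 1) + ε := by
          unfold condSurRisk
          rw [← Finset.add_sum_erase _ _ (Finset.mem_univ a)]
          have hrest : ∑ y ∈ Finset.univ.erase a, pext m c p y * ellmu m μ w y
              ≤ ∑ y ∈ Finset.univ.erase a, pext m c p y * (1 / (μ - 1)) :=
            Finset.sum_le_sum fun y _ =>
              mul_le_mul_of_nonneg_left (ellmu_le m μ hμ w y) (hpe0 y)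
          have hsum_erase : ∑ y ∈ Finset.univ.erase a, pext m c p y = P - pa := by
            have h := Finset.add_sum_erase Finset.univ (pext m c p) (Finset.mem_univ a)
            rw [← hP] at h
            linarith
          rw [← Finset.sum_mul, hsum_erase] at hrest
          have h5 : pext m c p a * ellmu m μ w a ≤ ε := by
            nlinarith [ellmu_nonneg m μ hμ w a, hpe1 a, hpe0 a, hea]
          have h6 : (P - pa) * (1 / (μ - 1)) = (P - pa) / (μ - 1) := by ring
          rw [h6] at hrest
          linarith
  -- comparison of the softmax weights
  have hqh : ∀ y, q y ≤ q h := by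
    intro y
    have hle := Real.exp_le_exp.mpr (vle_pred m v y)
    show Real.exp (v y) / T ≤ Real.exp (v (pred m v)) / T
    exact (div_le_div_iff_of_pos_right hT0).mpr hle
  have hqh1 : q h ≤ 1 := by
    rw [← hqsum]
    exact Finset.single_le_sum (f := q) (fun y _ => (hq0 y).le) (Finset.mem_univ h)
  have hqhK : ((m + 2 : ℕ) : ℝ)⁻¹ ≤ q h := by
    have h1 : (1:ℝ) ≤ ((m + 2 : ℕ) : ℝ) * q h := by
      rw [← hqsum]
      calc ∑ y, q y ≤ ∑ _y : Fin (m + 2), q h := Finset.sum_le_sum (fun y _ => hqh y)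
        _ = ((m + 2 : ℕ) : ℝ) * q h := by
            rw [Finset.sum_const, Finset.card_univ, Fintype.card_fin, nsmul_eq_mul]
    have h2 : (0:ℝ) < ((m + 2 : ℕ) : ℝ) := by positivity
    rw [inv_eq_one_div, div_le_iff₀ h2]
    nlinarith
  -- main pointwise inequality
  have hΦle : Φ ≤ ph * (q h) ^ (μ - 1) + pa * ((q h) ^ (μ - 2) * (1 - q h)) := by
    rw [hΦ, ← Finset.add_sum_erase _ _ (Finset.mem_univ h)]
    have hsum_erase : ∑ y ∈ Finset.univ.erase h, q y = 1 - q h := by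
      have he := Finset.add_sum_erase Finset.univ q (Finset.mem_univ h)
      rw [hqsum] at he
      linarith
    have hterm : ∀ y ∈ Finset.univ.erase h, pext m c p y * (q y) ^ (μ - 1)
        ≤ (pa * (q h) ^ (μ - 2)) * q y := by
      intro y _
      have e1 : (q y) ^ (μ - 1) = q y * (q y) ^ (μ - 2) := by
        rw [show μ - 1 = 1 + (μ - 2) by ring, Real.rpow_add (hq0 y), Real.rpow_one]
      have e2 : (q y) ^ (μ - 2) ≤ (q h) ^ (μ - 2) :=
        Real.rpow_le_rpow (hq0 y).le (hqh y) (by linarith)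
      rw [e1]
      calc pext m c p y * (q y * (q y) ^ (μ - 2))
          ≤ pa * (q y * (q h) ^ (μ - 2)) := by
            apply mul_le_mul (ha' y) (mul_le_mul_of_nonneg_left e2 (hq0 y).le)
              (mul_nonneg (hq0 y).le (Real.rpow_nonneg (hq0 y).le _)) (hpe0 a)
        _ = (pa * (q h) ^ (μ - 2)) * q y := by ring
    calc ph * (q h) ^ (μ - 1) + ∑ y ∈ Finset.univ.erase h, pext m c p y * (q y) ^ (μ - 1)
        ≤ ph * (q h) ^ (μ - 1) + ∑ y ∈ Finset.univ.erase h, (pa * (q h) ^ (μ - 2)) * q y := by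
          have := Finset.sum_le_sum hterm
          linarith
      _ = ph * (q h) ^ (μ - 1) + pa * ((q h) ^ (μ - 2) * (1 - q h)) := by
          rw [← Finset.mul_sum, hsum_erase]
          ring
  have hkey : (pa - ph) * (q h) ^ (μ - 1) ≤ pa - Φ := by
    have e3 : (q h) ^ (μ - 2) * q h = (q h) ^ (μ - 1) := by
      rw [show μ - 1 = (μ - 2) + 1 by ring, Real.rpow_add (hq0 h), Real.rpow_one]
    have e4 : (q h) ^ (μ - 2) ≤ 1 := Real.rpow_le_one (hq0 h).le hqh1 (by linarith)
    have e5 : (q h) ^ (μ - 2) * (1 - q h) = (q h) ^ (μ - 2) - (q h) ^ (μ - 1) := by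
      rw [← e3]; ring
    rw [e5] at hΦle
    linarith [mul_nonneg (hpe0 a) (by linarith : (0:ℝ) ≤ 1 - (q h) ^ (μ - 2)), hΦle]
  have hstep3 : (pa - ph) * K⁻¹ ≤ pa - Φ := by
    have h6 : K⁻¹ ≤ (q h) ^ (μ - 1) := by
      rw [hK, ← Real.inv_rpow (by positivity)]
      exact Real.rpow_le_rpow (by positivity) hqhK (by linarith)
    have hD : 0 ≤ pa - ph := by linarith [ha' h]
    calc (pa - ph) * K⁻¹ ≤ (pa - ph) * (q h) ^ (μ - 1) :=
          mul_le_mul_of_nonneg_left h6 hD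
      _ ≤ pa - Φ := hkey
  -- assembling
  have hgap : (pa - Φ) / (μ - 1) ≤ condSurRisk m μ c p v - ⨅ w, condSurRisk m μ c p w := by
    rw [hCv]
    have e : (pa - Φ) / (μ - 1) = (P - Φ) / (μ - 1) - (P - pa) / (μ - 1) := by ring
    linarith [hIsur]
  have hL : condAbsRisk m c p v - (⨅ w, condAbsRisk m c p w) ≤ pa - ph := by
    have e : condAbsRisk m c p v = 1 - ph := by
      unfold condAbsRisk
      rw [← hh, hph]
    rw [e]
    linarith [hIabs]
  have h8 : pa - Φ ≤ (condSurRisk m μ c p v - ⨅ w, condSurRisk m μ c p w) * (μ - 1) :=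
    (div_le_iff₀ hr0).mp hgap
  have h9 := mul_le_mul_of_nonneg_right (hstep3.trans h8) hK0.le
  have h11 : (pa - ph) * K⁻¹ * K = pa - ph := by
    field_simp
  have h12 : pa - ph
      ≤ (condSurRisk m μ c p v - ⨅ w, condSurRisk m μ c p w) * (μ - 1) * K := by
    linarith [h9, h11]
  linarith [hL, h12]
end

section
/- Lemma (Pinsker-type inequality used in the logistic case μ = 1). Let c ∈ (0,1) and let a ≥ b ≥ 0 with a + b ≤ 2 − c and a + b > 0. Then a·log( 2a/(a + b) ) + b·log( 2b/(a + b) ) ≥ (a − b)² / ( 2·(2 − c) ), with the convention 0·log 0 = 0. -/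
open Real Set

private lemma aux_hd1 {x : ℝ} (h1 : (1:ℝ) + x ≠ 0) (h2 : (1:ℝ) - x ≠ 0) :
    HasDerivAt (fun t : ℝ => Real.log (1 + t) - Real.log (1 - t) - 2 * t)
      (1 / (1 + x) - -1 / (1 - x) - 2) x := by
  have d1 : HasDerivAt (fun t : ℝ => 1 + t) 1 x := (hasDerivAt_id x).const_add 1
  have d2 : HasDerivAt (fun t : ℝ => 1 - t) (-1) x := (hasDerivAt_id x).const_sub 1
  have d3 : HasDerivAt (fun t : ℝ => 2 * t) 2 x := by
    simpa using (hasDerivAt_id x).const_mul 2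
  exact ((d1.log h1).sub (d2.log h2)).sub d3

private lemma aux_hd2 {x : ℝ} (h1 : (1:ℝ) + x ≠ 0) (h2 : (1:ℝ) - x ≠ 0) :
    HasDerivAt (fun t : ℝ => (1 + t) * Real.log (1 + t) + (1 - t) * Real.log (1 - t) - t ^ 2)
      (1 * Real.log (1 + x) + (1 + x) * (1 / (1 + x)) +
        ((-1) * Real.log (1 - x) + (1 - x) * (-1 / (1 - x))) - 2 * x) x := by
  have d1 : HasDerivAt (fun t : ℝ => 1 + t) 1 x := (hasDerivAt_id x).const_add 1
  have d2 : HasDerivAt (fun t : ℝ => 1 - t) (-1) x := (hasDerivAt_id x).const_sub 1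
  have d3 : HasDerivAt (fun t : ℝ => t ^ 2) (2 * x) x := by
    simpa using hasDerivAt_pow 2 x
  exact ((d1.mul (d1.log h1)).add (d2.mul (d2.log h2))).sub d3

private lemma aux_cont1 : ContinuousOn
    (fun t : ℝ => Real.log (1 + t) - Real.log (1 - t) - 2 * t) (Set.Ico (0:ℝ) 1) := by
  apply ContinuousOn.sub
  apply ContinuousOn.sub
  · exact ((continuous_const.add continuous_id').continuousOn).log
      (fun x hx => by simp only [Set.mem_Ico] at hx; show (1:ℝ) + x ≠ 0; nlinarith [hx.1])
  · exact ((continuous_const.sub continuous_id').continuousOn).log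
      (fun x hx => by simp only [Set.mem_Ico] at hx; show (1:ℝ) - x ≠ 0; nlinarith [hx.2])
  · exact (continuous_const.mul continuous_id').continuousOn

private lemma aux_cont2 : ContinuousOn
    (fun t : ℝ => (1 + t) * Real.log (1 + t) + (1 - t) * Real.log (1 - t) - t ^ 2)
    (Set.Ico (0:ℝ) 1) := by
  apply ContinuousOn.sub
  apply ContinuousOn.add
  · exact ((continuous_const.add continuous_id').continuousOn).mul
      (((continuous_const.add continuous_id').continuousOn).log
        (fun x hx => by simp only [Set.mem_Ico] at hx; show (1:ℝ) + x ≠ 0; nlinarith [hx.1]))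
  · exact ((continuous_const.sub continuous_id').continuousOn).mul
      (((continuous_const.sub continuous_id').continuousOn).log
        (fun x hx => by simp only [Set.mem_Ico] at hx; show (1:ℝ) - x ≠ 0; nlinarith [hx.2]))
  · exact (continuous_pow 2).continuousOn

private lemma aux_h_nonneg {t : ℝ} (ht0 : 0 ≤ t) (ht1 : t < 1) :
    0 ≤ Real.log (1 + t) - Real.log (1 - t) - 2 * t := by
  have hmono : MonotoneOn (fun t : ℝ => Real.log (1 + t) - Real.log (1 - t) - 2 * t)
      (Set.Ico (0:ℝ) 1) := by
    apply monotoneOn_of_deriv_nonneg (convex_Ico 0 1) aux_cont1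
    · intro x hx
      rw [interior_Ico] at hx
      obtain ⟨hx0, hx1⟩ := hx
      exact (aux_hd1 (by nlinarith) (by nlinarith)).differentiableAt.differentiableWithinAt
    · intro x hx
      rw [interior_Ico] at hx
      obtain ⟨hx0, hx1⟩ := hx
      have h1 : (1:ℝ) + x ≠ 0 := by nlinarith
      have h2 : (1:ℝ) - x ≠ 0 := by nlinarith
      rw [(aux_hd1 h1 h2).deriv]
      have : 1 / (1 + x) - -1 / (1 - x) - 2 = 2 * x ^ 2 / ((1 + x) * (1 - x)) := by
        field_simp; ring
      rw [this]
      apply div_nonneg (by positivity)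
      nlinarith
  have := hmono ⟨le_refl 0, one_pos⟩ ⟨ht0, ht1⟩ ht0
  simpa using this

private lemma aux_key {t : ℝ} (ht0 : 0 ≤ t) (ht1 : t < 1) :
    t ^ 2 ≤ (1 + t) * Real.log (1 + t) + (1 - t) * Real.log (1 - t) := by
  have hmono : MonotoneOn
      (fun t : ℝ => (1 + t) * Real.log (1 + t) + (1 - t) * Real.log (1 - t) - t ^ 2)
      (Set.Ico (0:ℝ) 1) := by
    apply monotoneOn_of_deriv_nonneg (convex_Ico 0 1) aux_cont2
    · intro x hx
      rw [interior_Ico] at hx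
      obtain ⟨hx0, hx1⟩ := hx
      exact (aux_hd2 (by nlinarith) (by nlinarith)).differentiableAt.differentiableWithinAt
    · intro x hx
      rw [interior_Ico] at hx
      obtain ⟨hx0, hx1⟩ := hx
      have h1 : (1:ℝ) + x ≠ 0 := by nlinarith
      have h2 : (1:ℝ) - x ≠ 0 := by nlinarith
      rw [(aux_hd2 h1 h2).deriv]
      have he : 1 * Real.log (1 + x) + (1 + x) * (1 / (1 + x)) +
          ((-1) * Real.log (1 - x) + (1 - x) * (-1 / (1 - x))) - 2 * x
          = Real.log (1 + x) - Real.log (1 - x) - 2 * x := by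
        field_simp
        ring
      rw [he]
      exact aux_h_nonneg hx0.le hx1
  have := hmono ⟨le_refl 0, one_pos⟩ ⟨ht0, ht1⟩ ht0
  norm_num at this
  linarith

/-- **Lemma (Pinsker-type inequality used in the logistic case `μ = 1`).**
For `c ∈ (0,1)` and `a ≥ b ≥ 0` with `0 < a + b ≤ 2 - c`,
`a log(2a/(a+b)) + b log(2b/(a+b)) ≥ (a-b)² / (2(2-c))` (with `0 · log 0 = 0`; note that
in Mathlib `Real.log 0 = 0`, which realizes this convention). -/
theorem stmt_14 (c a b : ℝ) (hc : c ∈ Set.Ioo (0 : ℝ) 1) (hba : b ≤ a) (hb : 0 ≤ b)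
    (hab : a + b ≤ 2 - c) (habpos : 0 < a + b) :
    (a - b) ^ 2 / (2 * (2 - c))
      ≤ a * Real.log (2 * a / (a + b)) + b * Real.log (2 * b / (a + b)) := by
  obtain ⟨hc0, hc1⟩ := hc
  have h2c : (0:ℝ) < 2 - c := by linarith
  rcases eq_or_lt_of_le hb with hb0 | hbpos
  · -- b = 0
    subst hb0
    have ha : 0 < a := by linarith
    rw [add_zero] at *
    have : 2 * a / a = 2 := by field_simp
    rw [this]
    have hlog2 : (0.6931471803 : ℝ) < Real.log 2 := Real.log_two_gt_d9
    have h1 : (a - 0) ^ 2 / (2 * (2 - c)) ≤ a / 2 := by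
      rw [div_le_div_iff₀ (by positivity) (by norm_num)]
      nlinarith
    have h2 : a / 2 ≤ a * Real.log 2 := by nlinarith
    simpa using h1.trans h2
  · -- b > 0
    set s := a + b with hs
    set t := (a - b) / s with htdef
    have hsne : s ≠ 0 := ne_of_gt habpos
    have ht0 : 0 ≤ t := div_nonneg (by linarith) habpos.le
    have ht1 : t < 1 := by
      rw [htdef, div_lt_one habpos]; linarith
    have e1 : 2 * a / s = 1 + t := by
      rw [htdef]; field_simp; ring
    have e2 : 2 * b / s = 1 - t := by
      rw [htdef]; field_simp; ring
    have key := aux_key ht0 ht1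
    have ea : a = s * (1 + t) / 2 := by rw [htdef]; field_simp; ring
    have eb : b = s * (1 - t) / 2 := by rw [htdef]; field_simp; ring
    have hmain : (a - b) ^ 2 / (2 * s)
        ≤ a * Real.log (2 * a / s) + b * Real.log (2 * b / s) := by
      rw [e1, e2]
      have h3 : a * Real.log (1 + t) + b * Real.log (1 - t)
          = s / 2 * ((1 + t) * Real.log (1 + t) + (1 - t) * Real.log (1 - t)) := by
        rw [ea, eb]; ring
      have h4 : (a - b) ^ 2 / (2 * s) = s / 2 * t ^ 2 := by
        rw [htdef]; field_simp
      rw [h3, h4]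
      have : (0:ℝ) ≤ s / 2 := by linarith
      nlinarith
    refine le_trans ?_ hmain
    apply div_le_div_of_nonneg_left (by positivity) (by positivity)
    linarith
end
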